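/- arXiv:1805.04486 — 2 statements merged into one kernel-verified Lean document; each statement's English description precedes it below -/
import Mathlib

section
/- For m ≥ 1 and k ≥ 0, the k-th moment of the sum S_m of m independent uniform [0,1] random variables equals S(m+k,m)/C(m+k,m), where S(·,·) is the Stirling number of the second kind. -/
open MeasureTheory Finset

/-- Stirling numbers of the second kind. -/
def stirlingSnd : ℕ → ℕ → ℕ
  | 0, 0 => 1
  | 0, _ + 1 => 0
  | _ + 1, 0 => 0
  | n + 1, k + 1 => (k + 1) * stirlingSnd n (k + 1) + stirlingSnd n k

lemma stirlingSnd_zero_right : ∀ n, stirlingSnd n 0 = if n = 0 then 1 else 0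
  | 0 => rfl
  | _ + 1 => rfl

lemma stirlingSnd_eq_zero_of_lt : ∀ {n m : ℕ}, n < m → stirlingSnd n m = 0
  | 0, _ + 1, _ => rfl
  | n + 1, m + 1, h => by
    have h' : n < m := Nat.lt_of_succ_lt_succ h
    show (m + 1) * stirlingSnd n (m + 1) + stirlingSnd n m = 0
    rw [stirlingSnd_eq_zero_of_lt (h'.trans (Nat.lt_succ_self m)),
      stirlingSnd_eq_zero_of_lt h', mul_zero]

lemma stirlingSnd_key : ∀ n m, (m + 1) * stirlingSnd n (m + 1)
    = ∑ i ∈ range n, n.choose i * stirlingSnd i m := by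
  intro n
  induction n with
  | zero => intro m; simp [stirlingSnd_eq_zero_of_lt]
  | succ n ih =>
    intro m
    have hsplit : ∑ i ∈ range (n + 1), (n + 1).choose i * stirlingSnd i m
        = ∑ i ∈ range n, n.choose i * stirlingSnd (i + 1) m
          + (∑ i ∈ range n, n.choose i * stirlingSnd i m + stirlingSnd n m) := by
      rw [Finset.sum_range_succ' (fun i => (n + 1).choose i * stirlingSnd i m) n]
      have h2 : (∑ i ∈ range n, n.choose (i + 1) * stirlingSnd (i + 1) m)
            + n.choose 0 * stirlingSnd 0 m
          = ∑ i ∈ range n, n.choose i * stirlingSnd i m + stirlingSnd n m := by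
        rw [← Finset.sum_range_succ' (fun i => n.choose i * stirlingSnd i m) n,
          Finset.sum_range_succ, Nat.choose_self, one_mul]
      simp only [Nat.choose_succ_succ, add_mul, Finset.sum_add_distrib,
        Nat.choose_zero_right, one_mul, Nat.succ_eq_add_one] at *
      omega
    rw [hsplit]
    cases m with
    | zero =>
      have h0 : ∀ i ∈ range n, n.choose i * stirlingSnd (i + 1) 0 = 0 := by
        intro i _; rw [stirlingSnd_zero_right]; simp
      rw [Finset.sum_congr rfl h0]
      simp only [Finset.sum_const_zero, zero_add]
      rw [← ih 0]
      show 1 * stirlingSnd (n + 1) 1 = 1 * stirlingSnd n 1 + stirlingSnd n 0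
      show 1 * ((0 + 1) * stirlingSnd n (0 + 1) + stirlingSnd n 0) = _
      ring
    | succ m' =>
      have hterm : ∀ i ∈ range n, n.choose i * stirlingSnd (i + 1) (m' + 1)
          = (m' + 1) * (n.choose i * stirlingSnd i (m' + 1)) + n.choose i * stirlingSnd i m' := by
        intro i _
        show n.choose i * ((m' + 1) * stirlingSnd i (m' + 1) + stirlingSnd i m') = _
        ring
      rw [Finset.sum_congr rfl hterm, Finset.sum_add_distrib, ← Finset.mul_sum,
        ← ih m', ← ih (m' + 1)]
      show (m' + 2) * stirlingSnd (n + 1) (m' + 2) = _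
      have hunf : stirlingSnd (n + 1) (m' + 2)
          = (m' + 2) * stirlingSnd n (m' + 2) + stirlingSnd n (m' + 1) := rfl
      rw [hunf]
      ring
noncomputable def Bmom (m k : ℕ) : ℝ := (stirlingSnd (m + k) m : ℝ) / ((m + k).choose m : ℝ)

lemma choose_cast_ne_zero {a b : ℕ} (h : a ≤ b) : ((b.choose a : ℕ) : ℝ) ≠ 0 := by
  exact_mod_cast (Nat.choose_pos h).ne'

lemma N2 {m k j : ℕ} (hj : j ≤ k) :
    ((k : ℝ) + 1) * ((m + k + 1).choose (m + j)) * ((m + j).choose m)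
      = ((m : ℝ) + 1) * ((m + k + 1).choose (m + 1)) * ((k + 1).choose j) := by
  have h1 : m + j ≤ m + k + 1 := by omega
  have h2 : m ≤ m + j := by omega
  have h3 : m + 1 ≤ m + k + 1 := by omega
  have h4 : j ≤ k + 1 := by omega
  rw [Nat.cast_choose ℝ h1, Nat.cast_choose ℝ h2, Nat.cast_choose ℝ h3, Nat.cast_choose ℝ h4]
  have e1 : m + k + 1 - (m + j) = k + 1 - j := by omega
  have e2 : m + j - m = j := by omega
  have e3 : m + k + 1 - (m + 1) = k := by omega
  rw [e1, e2, e3]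
  have f0 : ∀ a : ℕ, (Nat.factorial a : ℝ) ≠ 0 := fun a => by exact_mod_cast a.factorial_ne_zero
  field_simp
  rw [Nat.factorial_succ (m), Nat.factorial_succ (k)]
  push_cast
  ring

lemma Bmom_succ (m k : ℕ) :
    ((k : ℝ) + 1) * Bmom (m + 1) k
      = ∑ j ∈ range (k + 1), (((k + 1).choose j : ℕ) : ℝ) * Bmom m j := by
  set n := m + k + 1 with hn
  have hnat : (m + 1) * stirlingSnd n (m + 1)
      = ∑ j ∈ range (k + 1), n.choose (m + j) * stirlingSnd (m + j) m := by
    rw [stirlingSnd_key n m, ← Finset.sum_range_add_sum_Ico _ (show m ≤ n by omega)]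
    have hz : ∑ i ∈ range m, n.choose i * stirlingSnd i m = 0 := by
      apply Finset.sum_eq_zero
      intro i hi
      rw [stirlingSnd_eq_zero_of_lt (Finset.mem_range.mp hi), mul_zero]
    rw [hz, zero_add, Finset.sum_Ico_eq_sum_range,
      show n - m = k + 1 from by omega]
  have hCn : ((n.choose (m + 1) : ℕ) : ℝ) ≠ 0 := choose_cast_ne_zero (by omega)
  have hm1 : ((m : ℝ) + 1) ≠ 0 := by positivity
  apply mul_left_cancel₀ (mul_ne_zero hm1 hCn)
  have hLHS : ((m : ℝ) + 1) * (n.choose (m + 1)) * (((k : ℝ) + 1) * Bmom (m + 1) k)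
      = ((k : ℝ) + 1) * (((m : ℝ) + 1) * (stirlingSnd n (m + 1) : ℝ)) := by
    have : Bmom (m + 1) k = (stirlingSnd n (m + 1) : ℝ) / ((n.choose (m + 1) : ℕ) : ℝ) := by
      simp only [Bmom, show m + 1 + k = n from by omega]
    rw [this]
    field_simp
  rw [hLHS]
  have hRHS : ((m : ℝ) + 1) * (n.choose (m + 1))
        * (∑ j ∈ range (k + 1), (((k + 1).choose j : ℕ) : ℝ) * Bmom m j)
      = ((k : ℝ) + 1) * ∑ j ∈ range (k + 1), ((n.choose (m + j) : ℕ) : ℝ) * (stirlingSnd (m + j) m : ℝ) := by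
    rw [Finset.mul_sum, Finset.mul_sum]
    apply Finset.sum_congr rfl
    intro j hj
    have hj' : j ≤ k := by have := Finset.mem_range.mp hj; omega
    have hCj : (((m + j).choose m : ℕ) : ℝ) ≠ 0 := choose_cast_ne_zero (by omega)
    have hB : Bmom m j = (stirlingSnd (m + j) m : ℝ) / (((m + j).choose m : ℕ) : ℝ) := rfl
    rw [hB]
    have := N2 (m := m) (k := k) (j := j) hj'
    rw [hn]
    field_simp
    linear_combination (-(stirlingSnd (m + j) m : ℕ) : ℝ) * this
  rw [hRHS]
  have : ((m : ℝ) + 1) * (stirlingSnd n (m + 1) : ℝ)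
      = ∑ j ∈ range (k + 1), ((n.choose (m + j) : ℕ) : ℝ) * (stirlingSnd (m + j) m : ℝ) := by
    exact_mod_cast congrArg (fun x : ℕ => (x : ℝ)) hnat
  rw [this]
lemma Bmom_zero (k : ℕ) : Bmom 0 k = if k = 0 then 1 else 0 := by
  simp only [Bmom, zero_add, Nat.choose_zero_right, Nat.cast_one, div_one,
    stirlingSnd_zero_right]
  split <;> simp

open MeasureTheory
noncomputable def nuI : Measure ℝ := volume.restrict (Set.Icc 0 1)

instance : IsProbabilityMeasure nuI :=
  ⟨by rw [nuI, Measure.restrict_apply_univ, Real.volume_Icc]; norm_num⟩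

lemma ae_mem_of_prob {α : Type*} [MeasurableSpace α] (μ : Measure α) [IsProbabilityMeasure μ]
    {s : Set α} (hs : MeasurableSet s) (h : μ s = 1) : ∀ᵐ x ∂μ, x ∈ s := by
  have : μ sᶜ = 0 := (prob_compl_eq_zero_iff hs).mpr h
  rw [ae_iff]
  simpa [Set.compl_def] using this

lemma nuI_Icc : nuI (Set.Icc 0 1) = 1 := by
  rw [nuI, Measure.restrict_apply measurableSet_Icc, Set.inter_self, Real.volume_Icc]
  norm_num

lemma cube_ae (m : ℕ) :
    ∀ᵐ y ∂(Measure.pi fun _ : Fin m => nuI),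
      y ∈ Set.pi Set.univ (fun _ : Fin m => Set.Icc (0:ℝ) 1) := by
  apply ae_mem_of_prob _ (MeasurableSet.univ_pi fun _ => measurableSet_Icc)
  rw [Measure.pi_pi]
  simp [nuI_Icc]

lemma sum_mem_bounds {m : ℕ} {y : Fin m → ℝ}
    (hy : y ∈ Set.pi Set.univ (fun _ : Fin m => Set.Icc (0:ℝ) 1)) :
    (0:ℝ) ≤ ∑ i, y i ∧ ∑ i, y i ≤ m := by
  constructor
  · exact Finset.sum_nonneg fun i _ => (hy i trivial).1
  · calc ∑ i, y i ≤ ∑ _i : Fin m, (1:ℝ) := Finset.sum_le_sum fun i _ => (hy i trivial).2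
    _ = m := by simp

lemma meas_sum_pow (m j : ℕ) : Measurable fun y : Fin m → ℝ => (∑ i, y i) ^ j :=
  (Finset.measurable_sum univ fun i _ => measurable_pi_apply i).pow_const j

lemma int_cube (m j : ℕ) :
    Integrable (fun y : Fin m → ℝ => (∑ i, y i) ^ j) (Measure.pi fun _ : Fin m => nuI) := by
  apply Integrable.mono' (integrable_const ((m : ℝ) ^ j))
    (meas_sum_pow m j).aestronglyMeasurable
  filter_upwards [cube_ae m] with y hy
  obtain ⟨h0, h1⟩ := sum_mem_bounds hy
  rw [Real.norm_eq_abs, abs_pow, abs_of_nonneg h0]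
  exact pow_le_pow_left₀ h0 h1 j

lemma int_prod (m k : ℕ) :
    Integrable (fun z : ℝ × (Fin m → ℝ) => (z.1 + ∑ i, z.2 i) ^ k)
      (nuI.prod (Measure.pi fun _ : Fin m => nuI)) := by
  have hmeas : Measurable fun z : ℝ × (Fin m → ℝ) => (z.1 + ∑ i, z.2 i) ^ k :=
    (measurable_fst.add ((Finset.measurable_sum univ fun i _ =>
      measurable_pi_apply i).comp measurable_snd)).pow_const k
  apply Integrable.mono' (integrable_const (((m : ℝ) + 1) ^ k)) hmeas.aestronglyMeasurable
  have hae : ∀ᵐ z ∂(nuI.prod (Measure.pi fun _ : Fin m => nuI)),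
      z ∈ (Set.Icc (0:ℝ) 1) ×ˢ Set.pi Set.univ (fun _ : Fin m => Set.Icc (0:ℝ) 1) := by
    apply ae_mem_of_prob _ (measurableSet_Icc.prod
      (MeasurableSet.univ_pi fun _ => measurableSet_Icc))
    rw [Measure.prod_prod, nuI_Icc, Measure.pi_pi]
    simp [nuI_Icc]
  filter_upwards [hae] with z hz
  obtain ⟨⟨ht0, ht1⟩, hy⟩ := hz
  obtain ⟨h0, h1⟩ := sum_mem_bounds hy
  have hge : (0:ℝ) ≤ z.1 + ∑ i, z.2 i := by linarith
  rw [Real.norm_eq_abs, abs_pow, abs_of_nonneg hge]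
  apply pow_le_pow_left₀ hge
  linarith

lemma integral_nu_pow (s : ℝ) (k : ℕ) :
    ∫ t, (t + s) ^ k ∂nuI = ∑ j ∈ range (k + 1), ((k + 1).choose j : ℝ) * s ^ j / (k + 1) := by
  have h1 : ∫ t, (t + s) ^ k ∂nuI = ∫ t in (0:ℝ)..1, (t + s) ^ k := by
    rw [nuI, intervalIntegral.integral_of_le zero_le_one]
    exact MeasureTheory.integral_Icc_eq_integral_Ioc
  rw [h1, intervalIntegral.integral_comp_add_right (fun u => u ^ k) s, integral_pow]
  have hb : ((1:ℝ) + s) ^ (k + 1) = ∑ j ∈ range (k + 2), s ^ j * ((k + 1).choose j : ℝ) := by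
    rw [add_comm (1:ℝ) s]
    rw [add_pow]
    simp
  rw [zero_add, hb, Finset.sum_range_succ]
  simp only [Nat.choose_self, Nat.cast_one, mul_one]
  rw [add_sub_cancel_right, Finset.sum_div]
  apply Finset.sum_congr rfl
  intro j hj
  ring

lemma key_integral : ∀ m k : ℕ,
    ∫ x, (∑ i, x i) ^ k ∂(Measure.pi fun _ : Fin m => nuI) = Bmom m k := by
  intro m
  induction m with
  | zero =>
    intro k
    have : ∀ x : Fin 0 → ℝ, (∑ i, x i) ^ k = ((0:ℝ)) ^ k := by intro x; simp
    rw [show (fun x : Fin 0 → ℝ => (∑ i, x i) ^ k) = fun _ => ((0:ℝ)) ^ k from funext this]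
    rw [integral_const, Bmom_zero]
    cases k with
    | zero => simp
    | succ k => simp
  | succ m ih =>
    intro k
    have hmp := measurePreserving_piFinSuccAbove (fun _ : Fin (m + 1) => nuI) 0
    have hcomp : ∫ x, (∑ i, x i) ^ k ∂(Measure.pi fun _ : Fin (m + 1) => nuI)
        = ∫ z, (z.1 + ∑ i, z.2 i) ^ k ∂(nuI.prod (Measure.pi fun _ : Fin m => nuI)) := by
      rw [← hmp.integral_comp (MeasurableEquiv.measurableEmbedding _)
        (fun z : ℝ × (Fin m → ℝ) => (z.1 + ∑ i, z.2 i) ^ k)]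
      apply integral_congr_ae
      filter_upwards with x
      congr 1
      simp [MeasurableEquiv.piFinSuccAbove, Fin.sum_univ_succ, Fin.zero_succAbove, Fin.tail]
    rw [hcomp, integral_prod_symm _ (int_prod m k)]
    have hin : ∀ y : Fin m → ℝ, (∫ t, (t + ∑ i, y i) ^ k ∂nuI)
        = ∑ j ∈ range (k + 1), ((k + 1).choose j : ℝ) * (∑ i, y i) ^ j / (k + 1) :=
      fun y => integral_nu_pow _ k
    rw [integral_congr_ae (Filter.Eventually.of_forall hin)]
    rw [integral_finset_sum _ (fun j _ => ((int_cube m j).const_mul _).div_const _)]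
    have : ∀ j ∈ range (k + 1),
        (∫ y, ((k + 1).choose j : ℝ) * (∑ i, y i) ^ j / (k + 1)
          ∂(Measure.pi fun _ : Fin m => nuI))
        = ((k + 1).choose j : ℝ) * Bmom m j / (k + 1) := by
      intro j _
      rw [integral_div, integral_const_mul, ih j]
    rw [Finset.sum_congr rfl this]
    have hk : ((k : ℝ) + 1) ≠ 0 := by positivity
    have h2 : ∑ j ∈ range (k + 1), ((k + 1).choose j : ℝ) * Bmom m j / ((k : ℝ) + 1)
        = (∑ j ∈ range (k + 1), (((k + 1).choose j : ℕ) : ℝ) * Bmom m j) / ((k : ℝ) + 1) :=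
      (Finset.sum_div _ _ _).symm
    rw [h2, ← Bmom_succ m k, mul_comm, mul_div_assoc, div_self hk, mul_one]

theorem moment_sum_uniform
    {Ω : Type*} [MeasurableSpace Ω] (μ : Measure Ω) [IsProbabilityMeasure μ]
    (m : ℕ) (hm : 1 ≤ m) (k : ℕ) (U : Fin m → Ω → ℝ) (hmeas : ∀ i, Measurable (U i))
    (hindep : ProbabilityTheory.iIndepFun U μ)
    (hunif : ∀ i, Measure.map (U i) μ = volume.restrict (Set.Icc (0:ℝ) 1)) :
    ∫ ω, (∑ i, U i ω) ^ k ∂μ = (stirlingSnd (m + k) m : ℝ) / ((m + k).choose m : ℝ) := by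
  have hvec : Measurable fun ω (i : Fin m) => U i ω := measurable_pi_lambda _ hmeas
  have hmap : μ.map (fun ω i => U i ω) = Measure.pi (fun _ : Fin m => nuI) := by
    refine (Measure.pi_eq fun s hs => ?_).symm
    rw [Measure.map_apply hvec (MeasurableSet.univ_pi hs)]
    have hpre : (fun ω (i : Fin m) => U i ω) ⁻¹' Set.pi Set.univ s
        = ⋂ i ∈ Finset.univ, U i ⁻¹' s i := by
      ext ω; simp [Set.mem_pi]
    rw [hpre, hindep.measure_inter_preimage_eq_mul Finset.univ (fun i _ => hs i)]
    refine Finset.prod_congr rfl fun i _ => ?_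
    rw [← Measure.map_apply (hmeas i) (hs i), hunif i]
    rfl
  have h1 : ∫ ω, (∑ i, U i ω) ^ k ∂μ
      = ∫ x, (∑ i, x i) ^ k ∂(μ.map (fun ω i => U i ω)) :=
    (integral_map hvec.aemeasurable (meas_sum_pow m k).aestronglyMeasurable).symm
  rw [h1, hmap, key_integral m k]
  rfl
end

section
/- For all n ≥ 0, ∑_{k=0}^n C(n,k) c_k c_{n-k} = ∫_0^2 (θ)_n ρ_2(θ) dθ, where ρ_2(θ) = θ for θ ∈ [0,1] and ρ_2(θ) = 2-θ for θ ∈ [1,2], and (c_n) are the Cauchy numbers. -/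
open Finset

/-- Falling factorial `(θ)_n = θ(θ-1)⋯(θ-n+1)`. -/
noncomputable def fallFac (θ : ℝ) (n : ℕ) : ℝ := ∏ i ∈ Finset.range n, (θ - i)

/-- Cauchy numbers `c n = ∫_0^1 (θ)_n dθ`. -/
noncomputable def cauchy (n : ℕ) : ℝ := ∫ θ in (0:ℝ)..1, fallFac θ n

/-- Triangular density on `[0,2]`. -/
noncomputable def rhoTwo (θ : ℝ) : ℝ := if θ ≤ 1 then θ else 2 - θ

lemma fallFac_cont (n : ℕ) : Continuous fun θ : ℝ => fallFac θ n := by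
  unfold fallFac
  exact continuous_finset_prod _ fun i _ => continuous_id.sub continuous_const

lemma fallFac_eq_smeval (θ : ℝ) (n : ℕ) :
    fallFac θ n = (descPochhammer ℤ n).smeval θ := by
  induction n with
  | zero => simp [fallFac, descPochhammer_zero, Polynomial.smeval_one]
  | succ n ih =>
    rw [descPochhammer_succ_right, Polynomial.smeval_mul, ← ih]
    simp [fallFac, Finset.prod_range_succ, Polynomial.smeval_sub, Polynomial.smeval_X,
      Polynomial.smeval_natCast]

lemma fallFac_add (x y : ℝ) (n : ℕ) :
    fallFac (x + y) n =
      ∑ k ∈ Finset.range (n + 1),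
        (n.choose k : ℝ) * (fallFac x k * fallFac y (n - k)) := by
  have h := Ring.descPochhammer_smeval_add (R := ℝ) (r := x) (s := y) n (Commute.all x y)
  rw [Finset.Nat.sum_antidiagonal_eq_sum_range_succ_mk] at h
  simpa [fallFac_eq_smeval] using h

lemma rhoTwo_eq (θ : ℝ) : rhoTwo θ = min θ (2 - θ) := by
  unfold rhoTwo
  split
  · rw [min_eq_left (by linarith)]
  · rw [min_eq_right (by linarith)]

lemma rhoTwo_cont : Continuous rhoTwo := by
  simp only [funext rhoTwo_eq]
  exact continuous_id.min (continuous_const.sub continuous_id)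


theorem cauchy_self_convolution_integral (n : ℕ) :
    ∑ k ∈ Finset.range (n + 1), (n.choose k : ℝ) * cauchy k * cauchy (n - k) =
      ∫ θ in (0:ℝ)..2, fallFac θ n * rhoTwo θ := by
  set f : ℝ → ℝ := fun θ => fallFac θ n with hf
  have hfc : Continuous f := fallFac_cont n
  have hfi : ∀ a b : ℝ, IntervalIntegrable f MeasureTheory.volume a b :=
    fun a b => hfc.intervalIntegrable a b
  set F : ℝ → ℝ := fun x => ∫ t in (0:ℝ)..x, f t with hFdef
  have hFc : Continuous F := intervalIntegral.continuous_primitive hfi 0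
  have hFd : ∀ x : ℝ, HasDerivAt F (f x) x := fun x =>
    intervalIntegral.integral_hasDerivAt_right (hfi 0 x)
      hfc.stronglyMeasurable.stronglyMeasurableAtFilter hfc.continuousAt
  -- Step 1: LHS as a double integral
  have hinner : ∀ x : ℝ, (∫ y in (0:ℝ)..1, f (x + y)) =
      ∑ k ∈ Finset.range (n + 1), (n.choose k : ℝ) * (fallFac x k * cauchy (n - k)) := by
    intro x
    rw [intervalIntegral.integral_congr (g := fun y => ∑ k ∈ Finset.range (n + 1),
        (n.choose k : ℝ) * (fallFac x k * fallFac y (n - k))) (fun y _ => fallFac_add x y n),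
      intervalIntegral.integral_finset_sum (fun k _ =>
        ((continuous_const.fun_mul (continuous_const.fun_mul (fallFac_cont (n - k)))).intervalIntegrable _ _))]
    refine Finset.sum_congr rfl fun k _ => ?_
    rw [intervalIntegral.integral_const_mul, intervalIntegral.integral_const_mul]
    rfl
  have hLHS : (∫ x in (0:ℝ)..1, ∫ y in (0:ℝ)..1, f (x + y)) =
      ∑ k ∈ Finset.range (n + 1), (n.choose k : ℝ) * cauchy k * cauchy (n - k) := by
    rw [intervalIntegral.integral_congr (fun x _ => hinner x),
      intervalIntegral.integral_finset_sum (fun k _ =>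
        ((continuous_const.fun_mul ((fallFac_cont k).fun_mul continuous_const)).intervalIntegrable _ _))]
    refine Finset.sum_congr rfl fun k _ => ?_
    rw [intervalIntegral.integral_const_mul, intervalIntegral.integral_mul_const]
    show (n.choose k : ℝ) * (cauchy k * cauchy (n - k)) = _
    ring
  -- Step 2: inner integral via the primitive
  have hstep : ∀ x : ℝ, (∫ y in (0:ℝ)..1, f (x + y)) = F (x + 1) - F x := by
    intro x
    have h1 : (∫ y in (0:ℝ)..1, f (x + y)) = ∫ t in (x + 0 : ℝ)..(x + 1 : ℝ), f t :=
      intervalIntegral.integral_comp_add_left f x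
    rw [h1]
    rw [show (x + 0 : ℝ) = x by ring]
    exact (intervalIntegral.integral_interval_sub_left (hfi 0 (x + 1)) (hfi 0 x)).symm
  have hdouble : (∫ x in (0:ℝ)..1, ∫ y in (0:ℝ)..1, f (x + y)) =
      (∫ x in (1:ℝ)..2, F x) - ∫ x in (0:ℝ)..1, F x := by
    have i1 : IntervalIntegrable (fun x : ℝ => F (x + 1)) MeasureTheory.volume 0 1 :=
      (hFc.comp (continuous_id.add continuous_const)).intervalIntegrable _ _
    rw [intervalIntegral.integral_congr (fun x _ => hstep x),
      intervalIntegral.integral_sub i1 (hFc.intervalIntegrable _ _)]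
    congr 1
    have h := intervalIntegral.integral_comp_add_right (a := (0:ℝ)) (b := 1) F 1
    rw [h]
    norm_num
  -- Step 3: integration by parts
  have hparts : ∀ a b : ℝ, (∫ x in a..b, F x) =
      F b * b - F a * a - ∫ x in a..b, f x * x := by
    intro a b
    have h := intervalIntegral.integral_mul_deriv_eq_deriv_mul
      (u := F) (u' := f) (v := fun x => x) (v' := fun _ => (1:ℝ))
      (fun x _ => hFd x) (fun x _ => hasDerivAt_id x)
      (hfi a b) intervalIntegrable_const
    simpa using h
  -- Step 4: RHS split
  have hcongr1 : (∫ θ in (0:ℝ)..1, f θ * rhoTwo θ) = ∫ θ in (0:ℝ)..1, f θ * θ := by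
    apply intervalIntegral.integral_congr
    intro θ hθ
    rw [Set.uIcc_of_le (by norm_num)] at hθ
    simp [rhoTwo, hθ.2]
  have hcongr2 : (∫ θ in (1:ℝ)..2, f θ * rhoTwo θ) = ∫ θ in (1:ℝ)..2, f θ * (2 - θ) := by
    apply intervalIntegral.integral_congr
    intro θ hθ
    rw [Set.uIcc_of_le (by norm_num)] at hθ
    rcases le_or_gt θ 1 with h | h
    · have : θ = 1 := le_antisymm h hθ.1
      simp [rhoTwo, this]
      norm_num
    · simp [rhoTwo, not_le.mpr h]
  have hRHS : (∫ θ in (0:ℝ)..2, fallFac θ n * rhoTwo θ) =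
      (∫ θ in (0:ℝ)..1, f θ * θ) + ∫ θ in (1:ℝ)..2, f θ * (2 - θ) := by
    rw [← intervalIntegral.integral_add_adjacent_intervals (a := (0:ℝ)) (b := 1) (c := 2)
      ((hfc.fun_mul rhoTwo_cont).intervalIntegrable _ _)
      ((hfc.fun_mul rhoTwo_cont).intervalIntegrable _ _), hcongr1, hcongr2]
  have hsplit : (∫ θ in (1:ℝ)..2, f θ * (2 - θ)) =
      2 * (F 2 - F 1) - ∫ θ in (1:ℝ)..2, f θ * θ := by
    have h1 : (∫ θ in (1:ℝ)..2, f θ * (2 - θ)) =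
        ∫ θ in (1:ℝ)..2, (2 * f θ - f θ * θ) := by
      apply intervalIntegral.integral_congr
      intro θ _; ring
    have i2 : IntervalIntegrable (fun θ : ℝ => 2 * f θ) MeasureTheory.volume 1 2 :=
      (continuous_const.mul hfc).intervalIntegrable _ _
    have i3 : IntervalIntegrable (fun θ : ℝ => f θ * θ) MeasureTheory.volume 1 2 :=
      (hfc.mul continuous_id).intervalIntegrable _ _
    rw [h1, intervalIntegral.integral_sub i2 i3, intervalIntegral.integral_const_mul]
    have h2 : (∫ θ in (1:ℝ)..2, f θ) = F 2 - F 1 :=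
      (intervalIntegral.integral_interval_sub_left (hfi 0 2) (hfi 0 1)).symm
    rw [h2]
  have hF0 : F 0 = 0 := intervalIntegral.integral_same
  have e1 := hparts 0 1
  have e2 := hparts 1 2
  rw [← hLHS, hdouble, hRHS, hsplit, e1, e2, hF0]
  ring
end
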